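/- Let E be a horizontal self-affine carpet with the associated symbolic notation, let Q = [h,h']×[v,v'] be the smallest closed axis-parallel rectangle containing E, and Q_𝚓 = φ_𝚓(Q) for 𝚓 ∈ Σ_*. Then for every K ∈ ℕ there exists t_K > 0 such that for any 0 < t < t_K and any 𝚒 ∈ Σ, the closed ball B(π(𝚒),t) intersects at most one vertical line that contains a horizontal ending of some rectangle Q_{𝚒|_t 𝚓} with |𝚓| = K; that is, there is at most one a ∈ ℝ such that the line {a}×ℝ meets B(π(𝚒),t) and contains φ_{𝚒|_t 𝚓}({h}×[v,v']) or φ_{𝚒|_t 𝚓}({h'}×[v,v']) for some 𝚓 ∈ Σ_K. -/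

import Mathlib

open Set Metric Filter Topology

noncomputable section

/-- The Euclidean plane ℝ². -/
abbrev E2 := EuclideanSpace ℝ (Fin 2)

/-- The vertical line {a} × ℝ in ℝ². -/
def vline (a : ℝ) : Set E2 := {x | x 0 = a}

/-- A horizontal self-affine carpet: an IFS of invertible diagonal affine maps on ℝ²
satisfying (H1), together with its attractor `E` of diameter 1, satisfying the strong
separation condition and the vertical line condition (H2). -/
structure HorizontalCarpet where
  N : ℕ
  hN : 2 ≤ N
  a1 : Fin N → ℝ
  a2 : Fin N → ℝ
  b1 : Fin N → ℝ
  b2 : Fin N → ℝ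
  φ : Fin N → E2 → E2
  hφ : ∀ i x, φ i x = ![a1 i * x 0 + b1 i, a2 i * x 1 + b2 i]
  hH1 : ∀ i, 0 < a2 i ∧ a2 i < a1 i ∧ a1 i < 1
  E : Set E2
  hne : E.Nonempty
  hcomp : IsCompact E
  hinv : E = ⋃ i, φ i '' E
  hdiam : Metric.diam E = 1
  hssc : ∀ i j, i ≠ j → Disjoint (φ i '' E) (φ j '' E)
  hH2 : ∀ a : ℝ, (vline a ∩ convexHull ℝ E).Nonempty →
    ∃ i j : Fin N, i ≠ j ∧ (vline a ∩ φ i '' (convexHull ℝ E)).Nonempty ∧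
      (vline a ∩ φ j '' (convexHull ℝ E)).Nonempty

/-- `η : [0,∞) → [0,∞)` is a homeomorphism (expressed for a function `η : ℝ → ℝ`). -/
def IsHomeoOfIci (η : ℝ → ℝ) : Prop :=
  ∃ e : (Set.Ici (0:ℝ)) ≃ₜ (Set.Ici (0:ℝ)), ∀ x : Set.Ici (0:ℝ), (e x : ℝ) = η x

/-- `f` is η-quasisymmetric. -/
def IsQuasisymmetric {X Y : Type*} [MetricSpace X] [MetricSpace Y] (η : ℝ → ℝ)
    (f : X → Y) : Prop :=
  ∀ x y z : X, x ≠ z →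
    dist (f x) (f y) / dist (f x) (f z) ≤ η (dist x y / dist x z)

/-- The composition `φ_{i₁} ∘ ⋯ ∘ φ_{iₙ}` associated to a finite word. -/
def wordMap (c : HorizontalCarpet) : List (Fin c.N) → E2 → E2
  | [] => id
  | i :: l => c.φ i ∘ wordMap c l

/-- The first `n` entries `𝚒|_n` of an infinite word `𝚒 ∈ Σ`, as a list. -/
def wordPre (c : HorizontalCarpet) (i : ℕ → Fin c.N) (n : ℕ) : List (Fin c.N) :=
  (List.range n).map i

/-- `α₂(𝚒)`, the product of the vertical contraction ratios along a word. -/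
def prodA2 (c : HorizontalCarpet) (l : List (Fin c.N)) : ℝ := (l.map c.a2).prod

/-- `ᾱ = max_i α₁(i)`. -/
def alphaBar (c : HorizontalCarpet) : ℝ := sSup (Set.range c.a1)

/-- `α̲ = min_i α₂(i)`. -/
def alphaLow (c : HorizontalCarpet) : ℝ := sInf (Set.range c.a2)

/-- `δ = min_{i ≠ j} dist(φ_i(E), φ_j(E))`. -/
def sscGap (c : HorizontalCarpet) : ℝ :=
  sInf {d : ℝ | ∃ i j : Fin c.N, i ≠ j ∧
    ∃ x ∈ c.φ i '' c.E, ∃ y ∈ c.φ j '' c.E, d = dist x y}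

/-- `n(𝚒,t)`: the largest `n` such that `B(π(𝚒),t)` meets no level-`n` cylinder other
than `E_{𝚒|_n}`; here `p = π(𝚒)`. -/
def nSep (c : HorizontalCarpet) (i : ℕ → Fin c.N) (p : E2) (t : ℝ) : ℕ :=
  sSup {n : ℕ | ∀ l : List (Fin c.N), l.length = n → l ≠ wordPre c i n →
    wordMap c l '' c.E ∩ closedBall p t = ∅}

/-- `n^*(t) = min{n : ᾱ^n < t}`. -/
def nUp (c : HorizontalCarpet) (t : ℝ) : ℕ := sInf {n : ℕ | alphaBar c ^ n < t}

/-- `n_*(t) = max{n : α̲^n δ > t}`. -/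
def nLow (c : HorizontalCarpet) (t : ℝ) : ℕ :=
  sSup {n : ℕ | t < alphaLow c ^ n * sscGap c}
/-- The left edge `h` of the smallest closed axis-parallel rectangle `Q = [h,h']×[v,v']`
containing `E`. -/
def hLeft (c : HorizontalCarpet) : ℝ := sInf ((fun x : E2 => x 0) '' c.E)

/-- The right edge `h'` of `Q`. -/
def hRight (c : HorizontalCarpet) : ℝ := sSup ((fun x : E2 => x 0) '' c.E)

/-- The bottom edge `v` of `Q`. -/
def vBot (c : HorizontalCarpet) : ℝ := sInf ((fun x : E2 => x 1) '' c.E)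

/-- The top edge `v'` of `Q`. -/
def vTop (c : HorizontalCarpet) : ℝ := sSup ((fun x : E2 => x 1) '' c.E)

/-- The vertical line `{a} × ℝ` meets `B(p,t)` and contains a horizontal ending of some
rectangle `Q_{𝚒|_t 𝚓}` with `|𝚓| = K`. -/
def EndingLine (c : HorizontalCarpet) (i : ℕ → Fin c.N) (p : E2) (t : ℝ) (K : ℕ)
    (a : ℝ) : Prop :=
  (vline a ∩ closedBall p t).Nonempty ∧
  ∃ l : List (Fin c.N), l.length = K ∧
    (wordMap c (wordPre c i (nSep c i p t) ++ l) ''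
        {x : E2 | x 0 = hLeft c ∧ x 1 ∈ Set.Icc (vBot c) (vTop c)} ⊆ vline a ∨
     wordMap c (wordPre c i (nSep c i p t) ++ l) ''
        {x : E2 | x 0 = hRight c ∧ x 1 ∈ Set.Icc (vBot c) (vTop c)} ⊆ vline a)

namespace CarpetAux

variable (c : HorizontalCarpet)

instance : NeZero c.N := ⟨by have := c.hN; omega⟩

lemma a1_pos (i : Fin c.N) : 0 < c.a1 i := lt_trans (c.hH1 i).1 (c.hH1 i).2.1
lemma a2_pos (i : Fin c.N) : 0 < c.a2 i := (c.hH1 i).1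
lemma a1_lt_one (i : Fin c.N) : c.a1 i < 1 := (c.hH1 i).2.2
lemma a2_lt_a1 (i : Fin c.N) : c.a2 i < c.a1 i := (c.hH1 i).2.1

lemma phi0 (i : Fin c.N) (x : E2) : c.φ i x 0 = c.a1 i * x 0 + c.b1 i := by
  rw [c.hφ]; simp

lemma phi1 (i : Fin c.N) (x : E2) : c.φ i x 1 = c.a2 i * x 1 + c.b2 i := by
  rw [c.hφ]; simp

/-- `φ i` as an affine map. -/
noncomputable def affφ (i : Fin c.N) : E2 →ᵃ[ℝ] E2 :=
  AffineMap.mk' (c.φ i)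
    ((WithLp.linearEquiv 2 ℝ (Fin 2 → ℝ)).symm.toLinearMap ∘ₗ (LinearMap.pi (fun k : Fin 2 =>
      (if k = 0 then c.a1 i else c.a2 i) • (LinearMap.proj k : (Fin 2 → ℝ) →ₗ[ℝ] ℝ)))
      ∘ₗ (WithLp.linearEquiv 2 ℝ (Fin 2 → ℝ)).toLinearMap)
    0 (by
      intro x
      ext k
      fin_cases k
      · show c.φ i x 0 = c.a1 i * (x - 0 : E2) 0 + c.φ i 0 0
        rw [phi0, phi0]
        have h : (x - 0 : E2) 0 = x 0 := by simp
        rw [h, show (0:E2) 0 = 0 from rfl]; ring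
      · show c.φ i x 1 = c.a2 i * (x - 0 : E2) 1 + c.φ i 0 1
        rw [phi1, phi1]
        have h : (x - 0 : E2) 1 = x 1 := by simp
        rw [h, show (0:E2) 1 = 0 from rfl]; ring)

lemma affφ_coe (i : Fin c.N) : ⇑(affφ c i) = c.φ i := by
  simp [affφ]

lemma phi_continuous (i : Fin c.N) : Continuous (c.φ i) := by
  rw [← affφ_coe]
  exact (affφ c i).continuous_of_finiteDimensional

end CarpetAux
namespace CarpetAux

variable (c : HorizontalCarpet)

/-- Product of horizontal contraction ratios along a word. -/
def A1 (w : List (Fin c.N)) : ℝ := (w.map c.a1).prod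

/-- Product of vertical contraction ratios along a word. -/
def A2 (w : List (Fin c.N)) : ℝ := (w.map c.a2).prod

@[simp] lemma A1_nil : A1 c [] = 1 := rfl
@[simp] lemma A2_nil : A2 c [] = 1 := rfl
@[simp] lemma A1_cons (i : Fin c.N) (w : List (Fin c.N)) :
    A1 c (i :: w) = c.a1 i * A1 c w := by simp [A1]
@[simp] lemma A2_cons (i : Fin c.N) (w : List (Fin c.N)) :
    A2 c (i :: w) = c.a2 i * A2 c w := by simp [A2]

lemma A1_append (u v : List (Fin c.N)) : A1 c (u ++ v) = A1 c u * A1 c v := by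
  simp [A1]

lemma A2_append (u v : List (Fin c.N)) : A2 c (u ++ v) = A2 c u * A2 c v := by
  simp [A2]

lemma A1_pos (w : List (Fin c.N)) : 0 < A1 c w := by
  induction w with
  | nil => simp
  | cons i w ih => simpa using mul_pos (a1_pos c i) ih

lemma A2_pos (w : List (Fin c.N)) : 0 < A2 c w := by
  induction w with
  | nil => simp
  | cons i w ih => simpa using mul_pos (a2_pos c i) ih

lemma A2_le_A1 (w : List (Fin c.N)) : A2 c w ≤ A1 c w := by
  induction w with
  | nil => simp
  | cons i w ih =>
    simp only [A1_cons, A2_cons]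
    exact mul_le_mul (le_of_lt (a2_lt_a1 c i)) ih (le_of_lt (A2_pos c w)) (le_of_lt (a1_pos c i))

@[simp] lemma wordMap_nil (x : E2) : wordMap c [] x = x := rfl
@[simp] lemma wordMap_cons (i : Fin c.N) (w : List (Fin c.N)) (x : E2) :
    wordMap c (i :: w) x = c.φ i (wordMap c w x) := rfl

lemma wordMap_append (u v : List (Fin c.N)) (x : E2) :
    wordMap c (u ++ v) x = wordMap c u (wordMap c v x) := by
  induction u with
  | nil => simp
  | cons i u ih => simp [ih]

lemma wordMap_continuous (w : List (Fin c.N)) : Continuous (wordMap c w) := by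
  induction w with
  | nil => exact continuous_id
  | cons i w ih => exact (phi_continuous c i).comp ih

lemma wordMap0 (w : List (Fin c.N)) : ∀ x : E2,
    wordMap c w x 0 = A1 c w * x 0 + wordMap c w 0 0 := by
  induction w with
  | nil => intro x; simp [show (0:E2) 0 = 0 from rfl]
  | cons i w ih =>
    intro x
    simp only [wordMap_cons, phi0, A1_cons]
    rw [ih x, ih 0, show (0:E2) 0 = 0 from rfl]
    ring

lemma wordMap1 (w : List (Fin c.N)) : ∀ x : E2,
    wordMap c w x 1 = A2 c w * x 1 + wordMap c w 0 1 := by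
  induction w with
  | nil => intro x; simp [show (0:E2) 1 = 0 from rfl]
  | cons i w ih =>
    intro x
    simp only [wordMap_cons, phi1, A2_cons]
    rw [ih x, ih 0, show (0:E2) 1 = 0 from rfl]
    ring

end CarpetAux
namespace CarpetAux

variable (c : HorizontalCarpet)

lemma dist_eq_two (x y : E2) :
    dist x y = Real.sqrt (dist (x 0) (y 0) ^ 2 + dist (x 1) (y 1) ^ 2) := by
  rw [EuclideanSpace.dist_eq, Fin.sum_univ_two]

lemma coord_dist_le (x y : E2) (k : Fin 2) : dist (x k) (y k) ≤ dist x y := by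
  rw [dist_eq_two]
  fin_cases k
  · calc dist (x 0) (y 0) = Real.sqrt (dist (x 0) (y 0) ^ 2) := by
          rw [Real.sqrt_sq dist_nonneg]
      _ ≤ _ := Real.sqrt_le_sqrt (le_add_of_nonneg_right (sq_nonneg _))
  · calc dist (x 1) (y 1) = Real.sqrt (dist (x 1) (y 1) ^ 2) := by
          rw [Real.sqrt_sq dist_nonneg]
      _ ≤ _ := Real.sqrt_le_sqrt (le_add_of_nonneg_left (sq_nonneg _))

lemma dist_wordMap_eq (w : List (Fin c.N)) (x y : E2) :
    dist (wordMap c w x) (wordMap c w y)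
      = Real.sqrt ((A1 c w)^2 * dist (x 0) (y 0) ^ 2 + (A2 c w)^2 * dist (x 1) (y 1) ^ 2) := by
  rw [dist_eq_two]
  congr 1
  · have h0 : dist (wordMap c w x 0) (wordMap c w y 0) = A1 c w * dist (x 0) (y 0) := by
      rw [wordMap0 c w x, wordMap0 c w y, Real.dist_eq, Real.dist_eq]
      rw [show A1 c w * x 0 + wordMap c w 0 0 - (A1 c w * y 0 + wordMap c w 0 0)
            = A1 c w * (x 0 - y 0) by ring]
      rw [abs_mul, abs_of_pos (A1_pos c w)]
    have h1 : dist (wordMap c w x 1) (wordMap c w y 1) = A2 c w * dist (x 1) (y 1) := by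
      rw [wordMap1 c w x, wordMap1 c w y, Real.dist_eq, Real.dist_eq]
      rw [show A2 c w * x 1 + wordMap c w 0 1 - (A2 c w * y 1 + wordMap c w 0 1)
            = A2 c w * (x 1 - y 1) by ring]
      rw [abs_mul, abs_of_pos (A2_pos c w)]
    rw [h0, h1]; ring

lemma dist_wordMap_le (w : List (Fin c.N)) (x y : E2) :
    dist (wordMap c w x) (wordMap c w y) ≤ A1 c w * dist x y := by
  rw [dist_wordMap_eq, dist_eq_two]
  have h : (A1 c w)^2 * dist (x 0) (y 0) ^ 2 + (A2 c w)^2 * dist (x 1) (y 1) ^ 2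
      ≤ (A1 c w)^2 * (dist (x 0) (y 0) ^ 2 + dist (x 1) (y 1) ^ 2) := by
    have := A2_le_A1 c w
    have h2 := (A2_pos c w).le
    nlinarith [pow_le_pow_left₀ h2 this 2, sq_nonneg (dist (x 1) (y 1))]
  calc Real.sqrt _ ≤ Real.sqrt ((A1 c w)^2 * (dist (x 0) (y 0) ^ 2 + dist (x 1) (y 1) ^ 2)) :=
        Real.sqrt_le_sqrt h
    _ = A1 c w * Real.sqrt (dist (x 0) (y 0) ^ 2 + dist (x 1) (y 1) ^ 2) := by
        rw [Real.sqrt_mul (by positivity), Real.sqrt_sq (A1_pos c w).le]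

lemma le_dist_wordMap (w : List (Fin c.N)) (x y : E2) :
    A2 c w * dist x y ≤ dist (wordMap c w x) (wordMap c w y) := by
  rw [dist_wordMap_eq, dist_eq_two]
  have h : (A2 c w)^2 * (dist (x 0) (y 0) ^ 2 + dist (x 1) (y 1) ^ 2)
      ≤ (A1 c w)^2 * dist (x 0) (y 0) ^ 2 + (A2 c w)^2 * dist (x 1) (y 1) ^ 2 := by
    have := A2_le_A1 c w
    have h2 := (A2_pos c w).le
    nlinarith [pow_le_pow_left₀ h2 this 2, sq_nonneg (dist (x 0) (y 0))]
  calc A2 c w * Real.sqrt (dist (x 0) (y 0) ^ 2 + dist (x 1) (y 1) ^ 2)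
      = Real.sqrt ((A2 c w)^2 * (dist (x 0) (y 0) ^ 2 + dist (x 1) (y 1) ^ 2)) := by
        rw [Real.sqrt_mul (by positivity), Real.sqrt_sq (A2_pos c w).le]
    _ ≤ _ := Real.sqrt_le_sqrt h

end CarpetAux
namespace CarpetAux

variable (c : HorizontalCarpet)

lemma abar_mem : ∃ i, alphaBar c = c.a1 i := by
  have h := Set.Nonempty.csSup_mem (Set.range_nonempty c.a1) (Set.finite_range c.a1)
  obtain ⟨i, hi⟩ := h
  exact ⟨i, hi.symm⟩

lemma le_abar (i : Fin c.N) : c.a1 i ≤ alphaBar c :=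
  le_csSup (Set.finite_range c.a1).bddAbove ⟨i, rfl⟩

lemma abar_pos : 0 < alphaBar c := by
  obtain ⟨i, hi⟩ := abar_mem c; rw [hi]; exact a1_pos c i

lemma abar_lt_one : alphaBar c < 1 := by
  obtain ⟨i, hi⟩ := abar_mem c; rw [hi]; exact a1_lt_one c i

lemma alow_mem : ∃ i, alphaLow c = c.a2 i := by
  have h := Set.Nonempty.csInf_mem (Set.range_nonempty c.a2) (Set.finite_range c.a2)
  obtain ⟨i, hi⟩ := h
  exact ⟨i, hi.symm⟩

lemma alow_le (i : Fin c.N) : alphaLow c ≤ c.a2 i :=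
  csInf_le (Set.finite_range c.a2).bddBelow ⟨i, rfl⟩

lemma alow_pos : 0 < alphaLow c := by
  obtain ⟨i, hi⟩ := alow_mem c; rw [hi]; exact a2_pos c i

lemma alow_lt_one : alphaLow c < 1 := by
  obtain ⟨i, hi⟩ := alow_mem c
  rw [hi]
  exact lt_trans (a2_lt_a1 c i) (a1_lt_one c i)

/-- `max_i α₂(i)/α₁(i) < 1`. -/
noncomputable def rat : ℝ := sSup (Set.range (fun i => c.a2 i / c.a1 i))

lemma rat_mem : ∃ i, rat c = c.a2 i / c.a1 i := by
  have h := Set.Nonempty.csSup_mem (Set.range_nonempty (fun i => c.a2 i / c.a1 i))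
    (Set.finite_range _)
  obtain ⟨i, hi⟩ := h
  exact ⟨i, hi.symm⟩

lemma le_rat (i : Fin c.N) : c.a2 i / c.a1 i ≤ rat c :=
  le_csSup (Set.finite_range _).bddAbove ⟨i, rfl⟩

lemma rat_pos : 0 < rat c := by
  obtain ⟨i, hi⟩ := rat_mem c
  rw [hi]
  exact div_pos (a2_pos c i) (a1_pos c i)

lemma rat_lt_one : rat c < 1 := by
  obtain ⟨i, hi⟩ := rat_mem c
  rw [hi]
  exact (div_lt_one (a1_pos c i)).2 (a2_lt_a1 c i)

lemma a2_le_rat_a1 (i : Fin c.N) : c.a2 i ≤ rat c * c.a1 i := by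
  have := le_rat c i
  have h1 := a1_pos c i
  calc c.a2 i = c.a2 i / c.a1 i * c.a1 i := by field_simp
    _ ≤ rat c * c.a1 i := by
        exact mul_le_mul_of_nonneg_right this h1.le

lemma A2_le_rat_pow (w : List (Fin c.N)) : A2 c w ≤ rat c ^ w.length * A1 c w := by
  induction w with
  | nil => simp
  | cons i w ih =>
    simp only [A2_cons, A1_cons, List.length_cons, pow_succ]
    calc c.a2 i * A2 c w ≤ (rat c * c.a1 i) * (rat c ^ w.length * A1 c w) :=
          mul_le_mul (a2_le_rat_a1 c i) ih (A2_pos c w).le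
            (mul_nonneg (rat_pos c).le (a1_pos c i).le)
      _ = rat c ^ w.length * rat c * (c.a1 i * A1 c w) := by ring

lemma A1_le_abar_pow (w : List (Fin c.N)) : A1 c w ≤ alphaBar c ^ w.length := by
  induction w with
  | nil => simp
  | cons i w ih =>
    simp only [A1_cons, List.length_cons, pow_succ]
    calc c.a1 i * A1 c w ≤ alphaBar c * alphaBar c ^ w.length :=
          mul_le_mul (le_abar c i) ih (A1_pos c w).le (abar_pos c).le
      _ = alphaBar c ^ w.length * alphaBar c := by ring

lemma alow_pow_le_A2 (w : List (Fin c.N)) : alphaLow c ^ w.length ≤ A2 c w := by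
  induction w with
  | nil => simp
  | cons i w ih =>
    simp only [A2_cons, List.length_cons, pow_succ]
    calc alphaLow c ^ w.length * alphaLow c = alphaLow c * alphaLow c ^ w.length := by ring
      _ ≤ c.a2 i * A2 c w :=
          mul_le_mul (alow_le c i) ih (pow_nonneg (alow_pos c).le _) (a2_pos c i).le

/-- The convex hull of `E`. -/
noncomputable def X : Set E2 := convexHull ℝ c.E

lemma E_subset_X : c.E ⊆ X c := subset_convexHull ℝ c.E

lemma E_nonempty : c.E.Nonempty := c.hne

lemma phi_E_subset (i : Fin c.N) : c.φ i '' c.E ⊆ c.E := by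
  conv_rhs => rw [c.hinv]
  exact Set.subset_iUnion (fun j => c.φ j '' c.E) i

lemma phi_image_convexHull (i : Fin c.N) (s : Set E2) :
    c.φ i '' convexHull ℝ s = convexHull ℝ (c.φ i '' s) := by
  rw [← affφ_coe]
  exact (affφ c i).image_convexHull s

lemma phi_X_subset (i : Fin c.N) : c.φ i '' X c ⊆ X c := by
  rw [X, phi_image_convexHull]
  exact convexHull_mono (phi_E_subset c i)

lemma wordMap_E_subset (w : List (Fin c.N)) : wordMap c w '' c.E ⊆ c.E := by
  induction w with
  | nil => simp; exact fun x hx => hx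
  | cons i w ih =>
    calc wordMap c (i :: w) '' c.E = c.φ i '' (wordMap c w '' c.E) := by
          rw [← Set.image_comp]; rfl
      _ ⊆ c.φ i '' c.E := Set.image_mono ih
      _ ⊆ c.E := phi_E_subset c i

lemma wordMap_X_subset (w : List (Fin c.N)) : wordMap c w '' X c ⊆ X c := by
  induction w with
  | nil => simp; exact fun x hx => hx
  | cons i w ih =>
    calc wordMap c (i :: w) '' X c = c.φ i '' (wordMap c w '' X c) := by
          rw [← Set.image_comp]; rfl
      _ ⊆ c.φ i '' X c := Set.image_mono ih
      _ ⊆ X c := phi_X_subset c i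

lemma X_bounded : Bornology.IsBounded (X c) :=
  isBounded_convexHull.2 c.hcomp.isBounded

lemma dist_le_one_of_mem_X {x y : E2} (hx : x ∈ X c) (hy : y ∈ X c) : dist x y ≤ 1 := by
  have h := Metric.dist_le_diam_of_mem (X_bounded c) hx hy
  rwa [X, convexHull_diam, c.hdiam] at h

lemma dist_le_one_of_mem_E {x y : E2} (hx : x ∈ c.E) (hy : y ∈ c.E) : dist x y ≤ 1 :=
  dist_le_one_of_mem_X c (E_subset_X c hx) (E_subset_X c hy)

end CarpetAux
namespace CarpetAux

variable (c : HorizontalCarpet)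

lemma sscGap_le {i j : Fin c.N} (hij : i ≠ j) {x y : E2}
    (hx : x ∈ c.φ i '' c.E) (hy : y ∈ c.φ j '' c.E) : sscGap c ≤ dist x y := by
  apply csInf_le
  · refine ⟨0, fun d hd => ?_⟩
    obtain ⟨_, _, _, _, _, _, _, rfl⟩ := hd
    exact dist_nonneg
  · exact ⟨i, j, hij, x, hx, y, hy, rfl⟩

lemma phi_E_compact (i : Fin c.N) : IsCompact (c.φ i '' c.E) :=
  c.hcomp.image (phi_continuous c i)

lemma phi_E_nonempty (i : Fin c.N) : (c.φ i '' c.E).Nonempty :=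
  (E_nonempty c).image _

lemma sscGap_pos : 0 < sscGap c := by
  have key : ∀ p : Fin c.N × Fin c.N, ∃ ε : ℝ, 0 < ε ∧
      (p.1 ≠ p.2 → ∀ x ∈ c.φ p.1 '' c.E, ∀ y ∈ c.φ p.2 '' c.E, ε ≤ dist x y) := by
    rintro ⟨i, j⟩
    by_cases hij : i ≠ j
    · obtain ⟨x₀, hx₀, hmin⟩ := (phi_E_compact c i).exists_isMinOn (phi_E_nonempty c i)
        (continuous_infDist_pt (c.φ j '' c.E)).continuousOn
      have hx₀notin : x₀ ∉ c.φ j '' c.E := Set.disjoint_left.1 (c.hssc i j hij) hx₀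
      have hpos : 0 < Metric.infDist x₀ (c.φ j '' c.E) :=
        ((phi_E_compact c j).isClosed.notMem_iff_infDist_pos (phi_E_nonempty c j)).1 hx₀notin
      refine ⟨Metric.infDist x₀ (c.φ j '' c.E), hpos, fun _ x hx y hy => ?_⟩
      calc Metric.infDist x₀ (c.φ j '' c.E) ≤ Metric.infDist x (c.φ j '' c.E) := hmin hx
        _ ≤ dist x y := Metric.infDist_le_dist_of_mem hy
    · exact ⟨1, one_pos, fun h => absurd h hij⟩
  choose F hFpos hFle using key
  have hne : (Finset.univ.image F).Nonempty := by
    refine Finset.image_nonempty.2 Finset.univ_nonempty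
  set ε := (Finset.univ.image F).min' hne with hε
  have hεpos : 0 < ε := by
    obtain ⟨p, _, hp⟩ := Finset.mem_image.1 ((Finset.univ.image F).min'_mem hne)
    rw [hε, ← hp]; exact hFpos p
  have : ε ≤ sscGap c := by
    apply le_csInf
    · obtain ⟨e, he⟩ := E_nonempty c
      have h01 : (⟨0, by have := c.hN; omega⟩ : Fin c.N) ≠ ⟨1, by have := c.hN; omega⟩ := by
        simp [Fin.ext_iff]
      refine ⟨_, ⟨⟨0, by have := c.hN; omega⟩, ⟨1, by have := c.hN; omega⟩, h01,
          _, Set.mem_image_of_mem _ he, _, Set.mem_image_of_mem _ he, rfl⟩⟩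
    · rintro d ⟨i, j, hij, x, hx, y, hy, rfl⟩
      calc ε ≤ F (i, j) := Finset.min'_le _ _ (Finset.mem_image_of_mem F (Finset.mem_univ _))
        _ ≤ dist x y := hFle (i, j) hij x hx y hy
  linarith

lemma vline_closed (a : ℝ) : IsClosed (vline a) := by
  have : vline a = (fun x : E2 => x 0) ⁻¹' {a} := rfl
  rw [this]
  exact isClosed_singleton.preimage (EuclideanSpace.proj (0 : Fin 2)).continuous

end CarpetAux
namespace CarpetAux

variable (c : HorizontalCarpet)

lemma mem_vline {a : ℝ} {z : E2} : z ∈ vline a ↔ z 0 = a := Iff.rfl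

lemma sep_lemma : ∀ (u v : List (Fin c.N)), u.length = v.length → u ≠ v →
    ∀ x ∈ wordMap c u '' c.E, ∀ y ∈ wordMap c v '' c.E,
    sscGap c * alphaLow c ^ u.length ≤ dist x y := by
  intro u
  induction u with
  | nil =>
    intro v hlen hne
    cases v with
    | nil => exact absurd rfl hne
    | cons j v' => simp at hlen
  | cons i u ih =>
    intro v hlen hne x hx y hy
    cases v with
    | nil => simp at hlen
    | cons j v' =>
      have hlen' : u.length = v'.length := by simpa using hlen
      rw [show wordMap c (i :: u) = c.φ i ∘ wordMap c u from rfl, Set.image_comp] at hx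
      rw [show wordMap c (j :: v') = c.φ j ∘ wordMap c v' from rfl, Set.image_comp] at hy
      by_cases hij : i = j
      · subst hij
        obtain ⟨x', hx', rfl⟩ := hx
        obtain ⟨y', hy', rfl⟩ := hy
        have hne' : u ≠ v' := fun h => hne (by rw [h])
        have h1 : sscGap c * alphaLow c ^ u.length ≤ dist x' y' :=
          ih v' hlen' hne' x' hx' y' hy'
        have h2 : c.a2 i * dist x' y' ≤ dist (c.φ i x') (c.φ i y') := by
          have := le_dist_wordMap c [i] x' y'
          simpa using this
        have h3 : alphaLow c * (sscGap c * alphaLow c ^ u.length) ≤ c.a2 i * dist x' y' := by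
          exact mul_le_mul (alow_le c i) h1
            (mul_nonneg (sscGap_pos c).le (pow_nonneg (alow_pos c).le _)) (a2_pos c i).le
        calc sscGap c * alphaLow c ^ (i :: u).length
            = alphaLow c * (sscGap c * alphaLow c ^ u.length) := by
              simp [pow_succ]; ring
          _ ≤ c.a2 i * dist x' y' := h3
          _ ≤ dist (c.φ i x') (c.φ i y') := h2
      · have hx' : x ∈ c.φ i '' c.E :=
          Set.image_mono (wordMap_E_subset c u) hx
        have hy' : y ∈ c.φ j '' c.E :=
          Set.image_mono (wordMap_E_subset c v') hy
        have hd : sscGap c ≤ dist x y := sscGap_le c hij hx' hy'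
        have hle1 : alphaLow c ^ (i :: u).length ≤ 1 :=
          pow_le_one₀ (alow_pos c).le (alow_lt_one c).le
        calc sscGap c * alphaLow c ^ (i :: u).length ≤ sscGap c * 1 :=
              mul_le_mul_of_nonneg_left hle1 (sscGap_pos c).le
          _ = sscGap c := mul_one _
          _ ≤ dist x y := hd

end CarpetAux
namespace CarpetAux

variable (c : HorizontalCarpet)

lemma H2_step (w : List (Fin c.N)) (a : ℝ)
    (h : (vline a ∩ wordMap c w '' X c).Nonempty) :
    ∃ j j' : Fin c.N, j ≠ j' ∧ (vline a ∩ wordMap c (w ++ [j]) '' X c).Nonempty ∧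
      (vline a ∩ wordMap c (w ++ [j']) '' X c).Nonempty := by
  obtain ⟨x, hxv, y, hy, rfl⟩ := h
  have hxv' : wordMap c w y 0 = a := hxv
  have hmem : (vline (y 0) ∩ convexHull ℝ c.E).Nonempty := ⟨y, rfl, hy⟩
  obtain ⟨j, j', hjj, ⟨z, hz0, hz⟩, ⟨z', hz0', hz'⟩⟩ := c.hH2 (y 0) hmem
  have push : ∀ (k : Fin c.N) (u : E2), u ∈ c.φ k '' (convexHull ℝ c.E) → u 0 = y 0 →
      wordMap c w u ∈ vline a ∩ wordMap c (w ++ [k]) '' X c := by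
    intro k u hu hu0
    constructor
    · show wordMap c w u 0 = a
      rw [wordMap0 c w u, hu0, ← hxv', wordMap0 c w y]
    · have : u ∈ wordMap c [k] '' X c := by simpa [X] using hu
      obtain ⟨v, hv, rfl⟩ := this
      rw [← wordMap_append]
      exact Set.mem_image_of_mem _ hv
  exact ⟨j, j', hjj, ⟨wordMap c w z, push j z hz hz0⟩, ⟨wordMap c w z', push j' z' hz' hz0'⟩⟩

lemma vline_meets_E (u : List (Fin c.N)) (a : ℝ)
    (h : (vline a ∩ wordMap c u '' X c).Nonempty) :
    (vline a ∩ wordMap c u '' c.E).Nonempty := by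
  -- build an infinite nested sequence of words
  have step : ∀ w : List (Fin c.N), (vline a ∩ wordMap c w '' X c).Nonempty →
      ∃ j : Fin c.N, (vline a ∩ wordMap c (w ++ [j]) '' X c).Nonempty := by
    intro w hw
    obtain ⟨j, _, _, hj, _⟩ := H2_step c w a hw
    exact ⟨j, hj⟩
  classical
  choose step' hstep using step
  let f : ℕ → {w : List (Fin c.N) // (vline a ∩ wordMap c w '' X c).Nonempty} :=
    fun n => Nat.rec ⟨u, h⟩ (fun _ prev => ⟨prev.1 ++ [step' prev.1 prev.2], hstep prev.1 prev.2⟩) n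
  have hf0 : (f 0).1 = u := rfl
  have hfs : ∀ n, ∃ j, (f (n+1)).1 = (f n).1 ++ [j] := fun n => ⟨_, rfl⟩
  have htail : ∀ n, ∃ v : List (Fin c.N), (f n).1 = u ++ v ∧ v.length = n := by
    intro n
    induction n with
    | zero => exact ⟨[], by simp [hf0], rfl⟩
    | succ n ih =>
      obtain ⟨v, hv, hvl⟩ := ih
      obtain ⟨j, hj⟩ := hfs n
      exact ⟨v ++ [j], by rw [hj, hv, List.append_assoc], by simp [hvl]⟩
  -- the nested compact sets
  set S : ℕ → Set E2 := fun n => vline a ∩ closure (wordMap c (f n).1 '' X c) with hS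
  have hSne : ∀ n, (S n).Nonempty := by
    intro n
    obtain ⟨x, hx1, hx2⟩ := (f n).2
    exact ⟨x, hx1, subset_closure hx2⟩
  have hSclosed : ∀ n, IsClosed (S n) := fun n =>
    (vline_closed a).inter isClosed_closure
  have hSnested : ∀ n, S (n+1) ⊆ S n := by
    intro n
    obtain ⟨j, hj⟩ := hfs n
    apply Set.inter_subset_inter_right
    apply closure_mono
    rw [hj]
    intro z hz
    obtain ⟨y, hy, rfl⟩ := hz
    rw [wordMap_append]
    exact Set.mem_image_of_mem _ (phi_X_subset c j (Set.mem_image_of_mem _ hy))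
  have hSbounded : Bornology.IsBounded (S 0) := by
    apply Bornology.IsBounded.subset _ Set.inter_subset_right
    apply Metric.isBounded_closure_of_isBounded
    obtain ⟨x₀, hx₀⟩ := E_nonempty c
    have hx₀X := E_subset_X c hx₀
    rw [Metric.isBounded_iff]
    refine ⟨A1 c (f 0).1 * 1 + A1 c (f 0).1 * 1, ?_⟩
    rintro x ⟨y, hy, rfl⟩ z ⟨y', hy', rfl⟩
    calc dist (wordMap c (f 0).1 y) (wordMap c (f 0).1 y')
        ≤ dist (wordMap c (f 0).1 y) (wordMap c (f 0).1 x₀)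
          + dist (wordMap c (f 0).1 x₀) (wordMap c (f 0).1 y') := dist_triangle _ _ _
      _ ≤ A1 c (f 0).1 * 1 + A1 c (f 0).1 * 1 := by
          gcongr
          · calc dist (wordMap c (f 0).1 y) (wordMap c (f 0).1 x₀)
                ≤ A1 c (f 0).1 * dist y x₀ := dist_wordMap_le c _ _ _
              _ ≤ A1 c (f 0).1 * 1 :=
                  mul_le_mul_of_nonneg_left (dist_le_one_of_mem_X c hy hx₀X) (A1_pos c _).le
          · calc dist (wordMap c (f 0).1 x₀) (wordMap c (f 0).1 y')
                ≤ A1 c (f 0).1 * dist x₀ y' := dist_wordMap_le c _ _ _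
              _ ≤ A1 c (f 0).1 * 1 :=
                  mul_le_mul_of_nonneg_left (dist_le_one_of_mem_X c hx₀X hy') (A1_pos c _).le
  have hScompact : IsCompact (S 0) := Metric.isCompact_of_isClosed_isBounded (hSclosed 0) hSbounded
  obtain ⟨x, hx⟩ := IsCompact.nonempty_iInter_of_sequence_nonempty_isCompact_isClosed
    S hSnested hSne hScompact hSclosed
  simp only [Set.mem_iInter] at hx
  refine ⟨x, (hx 0).1, ?_⟩
  -- show x ∈ wordMap u '' E
  have hTcompact : IsCompact (wordMap c u '' c.E) := c.hcomp.image (wordMap_continuous c u)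
  have hTne : (wordMap c u '' c.E).Nonempty := (E_nonempty c).image _
  rw [hTcompact.isClosed.mem_iff_infDist_zero hTne]
  have hinf : ∀ n : ℕ, Metric.infDist x (wordMap c u '' c.E) ≤ A1 c u * alphaBar c ^ n := by
    intro n
    obtain ⟨v, hv, hvl⟩ := htail n
    have hxcl : x ∈ closure (wordMap c (f n).1 '' X c) := (hx n).2
    obtain ⟨e₀, he₀⟩ := E_nonempty c
    -- every point of wordMap (f n) '' X is close to the compact set
    have hclose : ∀ z ∈ wordMap c (f n).1 '' X c,
        Metric.infDist z (wordMap c u '' c.E) ≤ A1 c u * alphaBar c ^ n := by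
      rintro z ⟨y, hy, rfl⟩
      have hz2 : wordMap c u (wordMap c v e₀) ∈ wordMap c u '' c.E :=
        Set.mem_image_of_mem _ (wordMap_E_subset c v (Set.mem_image_of_mem _ he₀))
      have : dist (wordMap c (f n).1 y) (wordMap c u (wordMap c v e₀))
          ≤ A1 c u * alphaBar c ^ n := by
        rw [hv, wordMap_append]
        calc dist (wordMap c u (wordMap c v y)) (wordMap c u (wordMap c v e₀))
            ≤ A1 c u * dist (wordMap c v y) (wordMap c v e₀) := dist_wordMap_le c _ _ _
          _ ≤ A1 c u * (A1 c v * dist y e₀) := by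
              exact mul_le_mul_of_nonneg_left (dist_wordMap_le c _ _ _) (A1_pos c u).le
          _ ≤ A1 c u * (alphaBar c ^ n * 1) := by
              apply mul_le_mul_of_nonneg_left _ (A1_pos c u).le
              apply mul_le_mul _ (dist_le_one_of_mem_X c hy (E_subset_X c he₀)) dist_nonneg
                (pow_nonneg (abar_pos c).le _)
              rw [← hvl]; exact A1_le_abar_pow c v
          _ = A1 c u * alphaBar c ^ n := by ring
      exact (Metric.infDist_le_dist_of_mem hz2).trans this
    -- pass to the closure
    have hcont : Continuous (fun z => Metric.infDist z (wordMap c u '' c.E)) :=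
      continuous_infDist_pt _
    have : x ∈ closure {z : E2 | Metric.infDist z (wordMap c u '' c.E) ≤ A1 c u * alphaBar c ^ n} := by
      apply closure_mono _ hxcl
      intro z hz
      exact hclose z hz
    have hcl : IsClosed {z : E2 | Metric.infDist z (wordMap c u '' c.E) ≤ A1 c u * alphaBar c ^ n} :=
      isClosed_le hcont continuous_const
    rwa [hcl.closure_eq] at this
  have hnn : 0 ≤ Metric.infDist x (wordMap c u '' c.E) := Metric.infDist_nonneg
  by_contra hne0
  have hpos : 0 < Metric.infDist x (wordMap c u '' c.E) := lt_of_le_of_ne hnn (Ne.symm hne0)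
  obtain ⟨n, hn⟩ := exists_pow_lt_of_lt_one (div_pos hpos (A1_pos c u)) (abar_lt_one c)
  have h2 : A1 c u * alphaBar c ^ n < Metric.infDist x (wordMap c u '' c.E) := by
    have h3 := mul_lt_mul_of_pos_left hn (A1_pos c u)
    have h4 : A1 c u * (Metric.infDist x (wordMap c u '' c.E) / A1 c u)
        = Metric.infDist x (wordMap c u '' c.E) := by
      rw [mul_comm]
      exact div_mul_cancel₀ _ (ne_of_gt (A1_pos c u))
    rwa [h4] at h3
  linarith [hinf n]

end CarpetAux
namespace CarpetAux

variable (c : HorizontalCarpet)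

/-- The defining set of `nSep`. -/
def nsepSet (i : ℕ → Fin c.N) (p : E2) (t : ℝ) : Set ℕ :=
  {n : ℕ | ∀ l : List (Fin c.N), l.length = n → l ≠ wordPre c i n →
    wordMap c l '' c.E ∩ closedBall p t = ∅}

lemma nSep_eq (i : ℕ → Fin c.N) (p : E2) (t : ℝ) :
    nSep c i p t = sSup (nsepSet c i p t) := rfl

@[simp] lemma wordPre_length (i : ℕ → Fin c.N) (n : ℕ) : (wordPre c i n).length = n := by
  simp [wordPre]

lemma wordPre_succ (i : ℕ → Fin c.N) (n : ℕ) :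
    wordPre c i (n + 1) = wordPre c i n ++ [i n] := by
  simp [wordPre, List.range_succ]

lemma exists_ne_fin (m : Fin c.N) : ∃ j : Fin c.N, j ≠ m := by
  apply Fintype.exists_ne_of_one_lt_card
  simp only [Fintype.card_fin]
  have := c.hN; omega

lemma zero_mem_nsepSet (i : ℕ → Fin c.N) (p : E2) (t : ℝ) : 0 ∈ nsepSet c i p t := by
  intro l hl hne
  exact absurd (List.length_eq_zero_iff.1 hl) (by simpa [wordPre] using hne)

lemma nsepSet_bddAbove (i : ℕ → Fin c.N) (p : E2) (t : ℝ) (ht : 0 < t)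
    (hp : ∀ n : ℕ, p ∈ wordMap c (wordPre c i n) '' c.E) : BddAbove (nsepSet c i p t) := by
  obtain ⟨M, hM⟩ := exists_pow_lt_of_lt_one ht (abar_lt_one c)
  refine ⟨M, fun n hn => ?_⟩
  by_contra hgt
  push_neg at hgt
  obtain ⟨k, rfl⟩ : ∃ k, n = k + 1 := ⟨n - 1, by omega⟩
  have hMk : M ≤ k := by omega
  obtain ⟨j, hj⟩ := exists_ne_fin c (i k)
  have hne : wordPre c i k ++ [j] ≠ wordPre c i (k + 1) := by
    rw [wordPre_succ]
    intro h
    have := List.append_cancel_left h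
    simp only [List.cons.injEq] at this
    exact hj this.1
  have hempty := hn (wordPre c i k ++ [j]) (by simp) hne
  obtain ⟨pe, hpe, hpeq⟩ := hp k
  have hq : wordMap c (wordPre c i k ++ [j]) pe
      ∈ wordMap c (wordPre c i k ++ [j]) '' c.E ∩ closedBall p t := by
    constructor
    · exact Set.mem_image_of_mem _ hpe
    · rw [Metric.mem_closedBall, ← hpeq]
      have h1 : wordMap c (wordPre c i k ++ [j]) pe
          = wordMap c (wordPre c i k) (c.φ j pe) := by
        rw [wordMap_append]; rfl
      rw [h1]
      have hφE : c.φ j pe ∈ c.E := phi_E_subset c j (Set.mem_image_of_mem _ hpe)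
      calc dist (wordMap c (wordPre c i k) (c.φ j pe)) (wordMap c (wordPre c i k) pe)
          ≤ A1 c (wordPre c i k) * dist (c.φ j pe) pe := dist_wordMap_le c _ _ _
        _ ≤ A1 c (wordPre c i k) * 1 :=
            mul_le_mul_of_nonneg_left (dist_le_one_of_mem_E c hφE hpe) (A1_pos c _).le
        _ = A1 c (wordPre c i k) := mul_one _
        _ ≤ alphaBar c ^ k := by
            have := A1_le_abar_pow c (wordPre c i k)
            simpa using this
        _ ≤ alphaBar c ^ M := pow_le_pow_of_le_one (abar_pos c).le (abar_lt_one c).le hMk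
        _ ≤ t := hM.le
  rw [hempty] at hq
  exact hq

lemma nSep_mem (i : ℕ → Fin c.N) (p : E2) (t : ℝ) (ht : 0 < t)
    (hp : ∀ n : ℕ, p ∈ wordMap c (wordPre c i n) '' c.E) :
    nSep c i p t ∈ nsepSet c i p t :=
  Nat.sSup_mem ⟨0, zero_mem_nsepSet c i p t⟩ (nsepSet_bddAbove c i p t ht hp)

lemma nSep_succ_not_mem (i : ℕ → Fin c.N) (p : E2) (t : ℝ) (ht : 0 < t)
    (hp : ∀ n : ℕ, p ∈ wordMap c (wordPre c i n) '' c.E) :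
    nSep c i p t + 1 ∉ nsepSet c i p t := by
  intro h
  have := le_csSup (nsepSet_bddAbove c i p t ht hp) h
  rw [← nSep_eq] at this
  omega

lemma t_lower (i : ℕ → Fin c.N) (p : E2) (t : ℝ) (ht : 0 < t)
    (hp : ∀ n : ℕ, p ∈ wordMap c (wordPre c i n) '' c.E) :
    sscGap c * alphaLow c ^ (nSep c i p t + 1) ≤ t := by
  have hnot := nSep_succ_not_mem c i p t ht hp
  simp only [nsepSet, Set.mem_setOf_eq] at hnot
  push_neg at hnot
  obtain ⟨l, hlen, hlne, hne⟩ := hnot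
  obtain ⟨q, hq1, hq2⟩ := hne
  have hsep := sep_lemma c (wordPre c i (nSep c i p t + 1)) l (by simp [hlen])
    (Ne.symm hlne) p (hp _) q hq1
  rw [wordPre_length] at hsep
  calc sscGap c * alphaLow c ^ (nSep c i p t + 1) ≤ dist p q := hsep
    _ = dist q p := dist_comm _ _
    _ ≤ t := Metric.mem_closedBall.1 hq2

lemma t_upper (i : ℕ → Fin c.N) (p : E2) (t : ℝ) (ht : 0 < t)
    (hp : ∀ n : ℕ, p ∈ wordMap c (wordPre c i n) '' c.E)
    (hn1 : 1 ≤ nSep c i p t) :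
    t < A2 c (wordPre c i (nSep c i p t - 1)) := by
  set n := nSep c i p t with hn
  obtain ⟨k, hk⟩ : ∃ k, n = k + 1 := ⟨n - 1, by omega⟩
  have hk' : n - 1 = k := by omega
  rw [hk']
  set w := wordPre c i k with hw
  obtain ⟨pe, hpe, hpeq⟩ := hp k
  have hpX : p ∈ wordMap c w '' X c := by
    rw [← hpeq]; exact Set.mem_image_of_mem _ (E_subset_X c hpe)
  have hvp : (vline (p 0) ∩ wordMap c w '' X c).Nonempty := ⟨p, rfl, hpX⟩
  obtain ⟨j, j', hjj, hj1, hj2⟩ := H2_step c w (p 0) hvp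
  -- pick the child different from `i k`
  obtain ⟨jj, hjjm, hjmeets⟩ : ∃ jj : Fin c.N, jj ≠ i k ∧
      (vline (p 0) ∩ wordMap c (w ++ [jj]) '' X c).Nonempty := by
    by_cases hcase : j = i k
    · exact ⟨j', by rw [← hcase]; exact (Ne.symm hjj), hj2⟩
    · exact ⟨j, hcase, hj1⟩
  obtain ⟨x, hx0, hxE⟩ := vline_meets_E c (w ++ [jj]) (p 0) hjmeets
  -- the ball avoids this sibling cylinder
  have hnmem := nSep_mem c i p t ht hp
  have hlne : w ++ [jj] ≠ wordPre c i n := by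
    rw [hk, wordPre_succ, ← hw]
    intro h
    have := List.append_cancel_left h
    simp only [List.cons.injEq] at this
    exact hjjm this.1
  have hempty := hnmem (w ++ [jj]) (by simp only [List.length_append, List.length_cons,
    List.length_nil, hw, wordPre_length]; omega) hlne
  have hxnot : x ∉ closedBall p t := by
    intro hxb
    have : x ∈ wordMap c (w ++ [jj]) '' c.E ∩ closedBall p t := ⟨hxE, hxb⟩
    rw [hempty] at this
    exact this
  have htlt : t < dist x p := by
    by_contra hle
    push_neg at hle
    exact hxnot (Metric.mem_closedBall.2 hle)
  -- bound `dist x p` by the height of the parent cylinder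
  obtain ⟨xe, hxe, hxeq⟩ := hxE
  have hxeq' : x = wordMap c w (wordMap c [jj] xe) := by
    rw [← hxeq, wordMap_append]
  set x' := wordMap c [jj] xe with hx'
  have hx'E : x' ∈ c.E := wordMap_E_subset c [jj] (Set.mem_image_of_mem _ hxe)
  have hcoord : x' 0 = pe 0 := by
    have h1 : wordMap c w x' 0 = wordMap c w pe 0 := by
      rw [← hxeq', hpeq]; exact hx0
    rw [wordMap0 c w x', wordMap0 c w pe] at h1
    have := add_right_cancel h1
    exact mul_left_cancel₀ (ne_of_gt (A1_pos c w)) this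
  have hdist : dist x p ≤ A2 c w := by
    rw [hxeq', ← hpeq]
    rw [dist_wordMap_eq]
    have h0 : dist (x' 0) (pe 0) = 0 := by rw [hcoord, dist_self]
    rw [h0]
    have hd1 : dist (x' 1) (pe 1) ≤ 1 :=
      (coord_dist_le x' pe 1).trans (dist_le_one_of_mem_E c hx'E hpe)
    calc Real.sqrt (A1 c w ^ 2 * 0 ^ 2 + A2 c w ^ 2 * dist (x' 1) (pe 1) ^ 2)
        = Real.sqrt ((A2 c w * dist (x' 1) (pe 1)) ^ 2) := by ring_nf
      _ = A2 c w * dist (x' 1) (pe 1) := Real.sqrt_sq (mul_nonneg (A2_pos c w).le dist_nonneg)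
      _ ≤ A2 c w * 1 := mul_le_mul_of_nonneg_left hd1 (A2_pos c w).le
      _ = A2 c w := mul_one _
  linarith

end CarpetAux
namespace CarpetAux

variable (c : HorizontalCarpet)

lemma coord_continuous (k : Fin 2) : Continuous (fun x : E2 => x k) :=
  (EuclideanSpace.proj k).continuous

lemma vBot_le_vTop : vBot c ≤ vTop c := by
  apply Real.sInf_le_sSup
  · exact (c.hcomp.image (coord_continuous 1)).bddBelow
  · exact (c.hcomp.image (coord_continuous 1)).bddAbove

/-- The two lower corner points of `Q`. -/
noncomputable def cornerPt (b : Bool) : E2 :=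
  if b then !₂[hLeft c, vBot c] else !₂[hRight c, vBot c]

/-- The finitely many possible positions (inside `Q`) of vertical endings at level `K`. -/
noncomputable def SK (K : ℕ) : Finset ℝ :=
  Finset.image (fun q : (Fin K → Fin c.N) × Bool =>
    wordMap c (List.ofFn q.1) (cornerPt c q.2) 0) Finset.univ

lemma mem_SK {K : ℕ} {l : List (Fin c.N)} (hl : l.length = K) (b : Bool) :
    wordMap c l (cornerPt c b) 0 ∈ SK c K := by
  subst hl
  exact Finset.mem_image.2 ⟨(l.get, b), Finset.mem_univ _, by rw [List.ofFn_get]⟩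

noncomputable def TK (K : ℕ) : Finset ℝ :=
  Finset.image (fun q : ℝ × ℝ => |q.1 - q.2|) ((SK c K ×ˢ SK c K).filter fun q => q.1 ≠ q.2)

/-- The minimal gap between distinct level-`K` ending positions. -/
noncomputable def epsK (K : ℕ) : ℝ := if h : (TK c K).Nonempty then (TK c K).min' h else 1

lemma epsK_pos (K : ℕ) : 0 < epsK c K := by
  rw [epsK]; split_ifs with h
  · obtain ⟨q, hq, hval⟩ := Finset.mem_image.1 ((TK c K).min'_mem h)
    rw [← hval]
    obtain ⟨-, hne⟩ := Finset.mem_filter.1 hq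
    exact abs_pos.2 (sub_ne_zero.2 hne)
  · exact one_pos

lemma epsK_le {K : ℕ} {s s' : ℝ} (hs : s ∈ SK c K) (hs' : s' ∈ SK c K) (hne : s ≠ s') :
    epsK c K ≤ |s - s'| := by
  have hmem : |s - s'| ∈ TK c K := by
    have := Finset.mem_image_of_mem (fun q : ℝ × ℝ => |q.1 - q.2|)
      (Finset.mem_filter.2 ⟨Finset.mem_product.2 ⟨hs, hs'⟩, hne⟩ :
        ((s, s') : ℝ × ℝ) ∈ (SK c K ×ˢ SK c K).filter fun q => q.1 ≠ q.2)
    exact this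
  have h : (TK c K).Nonempty := ⟨_, hmem⟩
  rw [epsK, dif_pos h]
  exact Finset.min'_le _ _ hmem

lemma endingLine_extract {i : ℕ → Fin c.N} {p : E2} {t : ℝ} {K : ℕ} {a : ℝ}
    (hE : EndingLine c i p t K a) :
    |a - p 0| ≤ t ∧ ∃ s ∈ SK c K,
      a = A1 c (wordPre c i (nSep c i p t)) * s
        + wordMap c (wordPre c i (nSep c i p t)) 0 0 := by
  obtain ⟨⟨q, hq0, hqb⟩, l, hlK, hsub⟩ := hE
  have hq0' : q 0 = a := hq0
  constructor
  · have h1 : dist (q 0) (p 0) ≤ dist q p := coord_dist_le q p 0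
    rw [hq0'] at h1
    calc |a - p 0| = dist a (p 0) := (Real.dist_eq _ _).symm
      _ ≤ dist q p := h1
      _ ≤ t := Metric.mem_closedBall.1 hqb
  · rcases hsub with hsub | hsub
    · have hz : cornerPt c true ∈ {x : E2 | x 0 = hLeft c ∧ x 1 ∈ Set.Icc (vBot c) (vTop c)} := by
        constructor
        · show (!₂[hLeft c, vBot c] : E2) 0 = hLeft c
          simp
        · show (!₂[hLeft c, vBot c] : E2) 1 ∈ Set.Icc (vBot c) (vTop c)
          simp only [Matrix.cons_val_one, Matrix.head_cons]
          exact ⟨le_refl _, vBot_le_vTop c⟩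
      have ha : wordMap c (wordPre c i (nSep c i p t) ++ l) (cornerPt c true) 0 = a :=
        hsub (Set.mem_image_of_mem _ hz)
      refine ⟨wordMap c l (cornerPt c true) 0, mem_SK c hlK true, ?_⟩
      rw [← ha, wordMap_append, wordMap0]
    · have hz : cornerPt c false ∈ {x : E2 | x 0 = hRight c ∧ x 1 ∈ Set.Icc (vBot c) (vTop c)} := by
        constructor
        · show (!₂[hRight c, vBot c] : E2) 0 = hRight c
          simp
        · show (!₂[hRight c, vBot c] : E2) 1 ∈ Set.Icc (vBot c) (vTop c)
          simp only [Matrix.cons_val_one, Matrix.head_cons]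
          exact ⟨le_refl _, vBot_le_vTop c⟩
      have ha : wordMap c (wordPre c i (nSep c i p t) ++ l) (cornerPt c false) 0 = a :=
        hsub (Set.mem_image_of_mem _ hz)
      refine ⟨wordMap c l (cornerPt c false) 0, mem_SK c hlK false, ?_⟩
      rw [← ha, wordMap_append, wordMap0]

end CarpetAux
/-- Lemma 5.3 of the paper: for every `K` there is `t_K > 0` such that for `0 < t < t_K`
the ball `B(π(𝚒),t)` meets at most one vertical line containing a horizontal ending of a
rectangle `Q_{𝚒|_t 𝚓}` with `|𝚓| = K`. -/
theorem statement10 (c : HorizontalCarpet) (K : ℕ) :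
    ∃ tK : ℝ, 0 < tK ∧ ∀ t : ℝ, 0 < t → t < tK →
      ∀ (i : ℕ → Fin c.N) (p : E2), (∀ n : ℕ, p ∈ wordMap c (wordPre c i n) '' c.E) →
      ∀ a a' : ℝ, EndingLine c i p t K a → EndingLine c i p t K a' → a = a' := by
  classical
  open CarpetAux in
  have hδ := sscGap_pos c
  have hα := alow_pos c
  have hε := epsK_pos c K
  obtain ⟨n₀, hn₀⟩ := exists_pow_lt_of_lt_one
    (show 0 < alphaLow c * epsK c K / 2 by positivity) (rat_lt_one c)
  refine ⟨sscGap c * alphaLow c ^ (n₀ + 3), by positivity, ?_⟩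
  intro t ht htK i p hp a a' hA hA'
  by_contra hne
  have hlow := t_lower c i p t ht hp
  obtain ⟨hb, s, hsSK, hsa⟩ := endingLine_extract c hA
  obtain ⟨hb', s', hsSK', hsa'⟩ := endingLine_extract c hA'
  obtain ⟨n, hns⟩ : ∃ n, nSep c i p t = n := ⟨_, rfl⟩
  rw [hns] at hlow hsa hsa'
  have hnlarge : n₀ + 2 ≤ n := by
    by_contra hsmall
    push_neg at hsmall
    have h1 : alphaLow c ^ (n₀ + 3) ≤ alphaLow c ^ (n + 1) :=
      pow_le_pow_of_le_one hα.le (alow_lt_one c).le (by omega)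
    have h2 : sscGap c * alphaLow c ^ (n₀ + 3) ≤ sscGap c * alphaLow c ^ (n + 1) :=
      mul_le_mul_of_nonneg_left h1 hδ.le
    linarith
  have hup := t_upper c i p t ht hp (by rw [hns]; omega)
  rw [hns] at hup
  obtain ⟨k, hk⟩ : ∃ k, n = k + 1 := ⟨n - 1, by omega⟩
  rw [show n - 1 = k from by omega] at hup
  set w := wordPre c i n with hwdef
  set B := wordMap c w 0 0 with hB
  have hss : s ≠ s' := by
    intro h
    apply hne
    rw [hsa, hsa', h]
  have hgap := epsK_le c hsSK hsSK' hss
  have haa : |a - a'| = A1 c w * |s - s'| := by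
    rw [hsa, hsa',
      show A1 c w * s + B - (A1 c w * s' + B) = A1 c w * (s - s') by ring,
      abs_mul, abs_of_pos (A1_pos c w)]
  have haa2 : |a - a'| ≤ 2 * t := by
    calc |a - a'| ≤ |a - p 0| + |p 0 - a'| := abs_sub_le _ _ _
      _ ≤ t + t := by
          rw [abs_sub_comm (p 0) a']
          exact add_le_add hb hb'
      _ = 2 * t := by ring
  have hsplit : A1 c w = A1 c (wordPre c i k) * c.a1 (i k) := by
    rw [hwdef, hk, wordPre_succ, A1_append]
    simp [A1]
  have hA2r : A2 c (wordPre c i k) ≤ rat c ^ k * A1 c (wordPre c i k) := by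
    have h := A2_le_rat_pow c (wordPre c i k)
    rwa [wordPre_length] at h
  have hrk : rat c ^ k ≤ rat c ^ n₀ :=
    pow_le_pow_of_le_one (rat_pos c).le (rat_lt_one c).le (by omega)
  have halow : alphaLow c ≤ c.a1 (i k) := (alow_le c (i k)).trans (a2_lt_a1 c (i k)).le
  have hA1k := A1_pos c (wordPre c i k)
  have c1 : A1 c w * epsK c K ≤ |a - a'| := by
    rw [haa]
    exact mul_le_mul_of_nonneg_left hgap (A1_pos c w).le
  have c3 : A2 c (wordPre c i k) ≤ rat c ^ n₀ * A1 c (wordPre c i k) :=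
    hA2r.trans (mul_le_mul_of_nonneg_right hrk hA1k.le)
  have c4 : rat c ^ n₀ * A1 c (wordPre c i k)
      < alphaLow c * epsK c K / 2 * A1 c (wordPre c i k) :=
    mul_lt_mul_of_pos_right hn₀ hA1k
  have c5 : alphaLow c * epsK c K * A1 c (wordPre c i k) ≤ A1 c w * epsK c K := by
    calc alphaLow c * epsK c K * A1 c (wordPre c i k)
        = alphaLow c * (epsK c K * A1 c (wordPre c i k)) := by ring
      _ ≤ c.a1 (i k) * (epsK c K * A1 c (wordPre c i k)) :=
          mul_le_mul_of_nonneg_right halow (mul_nonneg hε.le hA1k.le)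
      _ = A1 c (wordPre c i k) * c.a1 (i k) * epsK c K := by ring
      _ = A1 c w * epsK c K := by rw [← hsplit]
  linarith
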